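/- (Lemma 1.) Let O, P ∈ EuclideanSpace ℝ (Fin 2), V a nonzero vector, and define the trajectory p(t) = P + t • V. Let R ≥ 0 and t₁ < t₂ be such that dist (p t₁) O = R and dist (p t₂) O = R (the entry and exit points of the trajectory on the circle of center O and radius R). Let d = Metric.infDist O (Set.range p) be the closest distance of the trajectory to O. Then ‖V‖ * (t₂ - t₁) = 2 * Real.sqrt (R^2 - d^2). In particular, given the entry and exit times, knowledge of the closest distance d and knowledge of the speed ‖V‖ are equivalent. -/

import Mathlib

/-- Lemma 1: given entry and exit times `t₁ < t₂` of the uniform linear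
trajectory `p t = P + t • V` on the circle of center `O` and radius `R`, the
speed `‖V‖` and the closest distance `d` of the trajectory to `O` determine
each other via `‖V‖ * (t₂ - t₁) = 2 * √(R² - d²)`. -/
theorem speed_mul_time_eq_chord (O P V : EuclideanSpace ℝ (Fin 2)) (hV : V ≠ 0)
    (R : ℝ) (hR : 0 ≤ R) (t₁ t₂ : ℝ) (ht : t₁ < t₂)
    (p : ℝ → EuclideanSpace ℝ (Fin 2)) (hp : p = fun t => P + t • V)
    (h₁ : dist (p t₁) O = R) (h₂ : dist (p t₂) O = R)
    (d : ℝ) (hd : d = Metric.infDist O (Set.range p)) :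
    ‖V‖ * (t₂ - t₁) = 2 * Real.sqrt (R ^ 2 - d ^ 2) := by
  set t₀ : ℝ := (t₁ + t₂) / 2 with ht₀
  set s : ℝ := (t₂ - t₁) / 2 with hs
  have hspos : 0 < s := by rw [hs]; linarith
  set W : EuclideanSpace ℝ (Fin 2) := P + t₀ • V - O with hW
  have key : ∀ t : ℝ, ‖P + t • V - O‖ ^ 2
      = ‖W‖ ^ 2 + 2 * (t - t₀) * (inner ℝ W V : ℝ) + (t - t₀) ^ 2 * ‖V‖ ^ 2 := by
    intro t
    have hdecomp : P + t • V - O = W + (t - t₀) • V := by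
      rw [hW, sub_smul]; abel
    rw [hdecomp, norm_add_sq_real, real_inner_smul_right, norm_smul]
    rw [mul_pow, Real.norm_eq_abs, sq_abs]
    ring
  have hd₁ : ‖P + t₁ • V - O‖ ^ 2 = R ^ 2 := by
    rw [hp] at h₁; rw [← h₁, dist_eq_norm]
  have hd₂ : ‖P + t₂ • V - O‖ ^ 2 = R ^ 2 := by
    rw [hp] at h₂; rw [← h₂, dist_eq_norm]
  have ht₁ : t₁ - t₀ = -s := by rw [ht₀, hs]; ring
  have ht₂ : t₂ - t₀ = s := by rw [ht₀, hs]; ring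
  have e₁ := key t₁
  have e₂ := key t₂
  rw [ht₁, hd₁] at e₁
  rw [ht₂, hd₂] at e₂
  have horth : (inner ℝ W V : ℝ) = 0 := by
    have : 4 * s * (inner ℝ W V : ℝ) = 0 := by nlinarith [e₁, e₂]
    have hs4 : (4 : ℝ) * s ≠ 0 := by positivity
    exact (mul_eq_zero.mp this).resolve_left hs4
  have hR2 : R ^ 2 = ‖W‖ ^ 2 + s ^ 2 * ‖V‖ ^ 2 := by
    rw [e₂, horth]; ring
  -- infDist equals ‖W‖
  have hmem : p t₀ ∈ Set.range p := Set.mem_range_self t₀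
  have hdist₀ : dist O (p t₀) = ‖W‖ := by
    rw [hp]; simp only [dist_eq_norm, hW]
    rw [← norm_neg]; congr 1; abel
  have hle : Metric.infDist O (Set.range p) ≤ ‖W‖ := by
    rw [← hdist₀]; exact Metric.infDist_le_dist_of_mem hmem
  have hge : ‖W‖ ≤ Metric.infDist O (Set.range p) := by
    by_contra hcon
    push_neg at hcon
    obtain ⟨y, ⟨t, rfl⟩, hy⟩ := (Metric.infDist_lt_iff ⟨_, hmem⟩).mp hcon
    apply absurd hy
    push_neg
    rw [hp, dist_eq_norm]
    have h1 : ‖O - (P + t • V)‖ = ‖P + t • V - O‖ := by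
      rw [← norm_neg]; congr 1; abel
    rw [h1]
    have h2 : ‖W‖ ^ 2 ≤ ‖P + t • V - O‖ ^ 2 := by
      rw [key t, horth]; nlinarith [sq_nonneg (t - t₀), sq_nonneg ‖V‖]
    calc ‖W‖ = Real.sqrt (‖W‖ ^ 2) := (Real.sqrt_sq (norm_nonneg _)).symm
      _ ≤ Real.sqrt (‖P + t • V - O‖ ^ 2) := Real.sqrt_le_sqrt h2
      _ = ‖P + t • V - O‖ := Real.sqrt_sq (norm_nonneg _)
  have hdW : d = ‖W‖ := by rw [hd]; exact le_antisymm hle hge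
  have hfinal : R ^ 2 - d ^ 2 = (‖V‖ * s) ^ 2 := by
    rw [hdW, hR2]; ring
  rw [hfinal, Real.sqrt_sq (by positivity)]
  rw [hs]; ring
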